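/- arXiv:1310.1035 — 2 statements merged into one kernel-verified Lean document; each statement's English description precedes it below -/
import Mathlib

section
/- Let f : ℍ₊ → ℍ be slice hyperholomorphic on the half-space ℍ₊ = {p ∈ ℍ : Re p > 0}, and for I ∈ 𝕊 put N_I(f) = sup_{x>0} ∫_ℝ |f(x + Iy)|² dy ∈ [0, ∞]. Then for all I, J ∈ 𝕊 one has N_J(f) ≤ 4 N_I(f); equivalently, (1/2)·N_I(f)^{1/2} ≤ N_J(f)^{1/2} ≤ 2·N_I(f)^{1/2}. -/
local notation "ℍ" => Quaternion ℝ

open scoped ENNReal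

/-- The complex plane `ℂ_I = ℝ + Iℝ` through `1` and `I`. -/
def slicePlane (I : ℍ) : Set ℍ := {p | ∃ x y : ℝ, p = (x : ℍ) + (y : ℍ) * I}

/-- `f : Ω → ℍ` is (left) slice hyperholomorphic on `Ω`. -/
def SliceHyperholomorphicOn (f : ℍ → ℍ) (Ω : Set ℍ) : Prop :=
  DifferentiableOn ℝ f Ω ∧
    ∀ I : ℍ, I ^ 2 = -1 → ∀ p ∈ Ω ∩ slicePlane I,
      fderiv ℝ f p 1 + I * fderiv ℝ f p I = 0

/-- `N_I(f) = sup_{x>0} ∫_ℝ |f(x + Iy)|² dy ∈ [0, ∞]`, the (squared) Hardy norm of `f`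
on the slice `Π₊,I`. -/
noncomputable def hardyN (f : ℍ → ℍ) (I : ℍ) : ℝ≥0∞ :=
  ⨆ (x : ℝ) (_ : 0 < x), ∫⁻ y : ℝ, (‖f ((x : ℍ) + (y : ℍ) * I)‖₊ : ℝ≥0∞) ^ 2

section Aux

variable {I : ℍ}

lemma sq_neg_one_re (hI : I ^ 2 = -1) : I.re = 0 := by
  have h := congrArg QuaternionAlgebra.re hI
  have h2 := congrArg QuaternionAlgebra.imI hI
  have h3 := congrArg QuaternionAlgebra.imJ hI
  have h4 := congrArg QuaternionAlgebra.imK hI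
  simp [pow_two, Quaternion.re_mul, Quaternion.imI_mul, Quaternion.imJ_mul,
    Quaternion.imK_mul, Quaternion.re_one, Quaternion.imI_one, Quaternion.imJ_one,
    Quaternion.imK_one] at h h2 h3 h4
  by_contra hre
  have hI1 : I.imI = 0 := by
    have h5 : I.re * I.imI = 0 := by linarith
    exact (mul_eq_zero.1 h5).resolve_left hre
  have hI2 : I.imJ = 0 := by
    have h5 : I.re * I.imJ = 0 := by linarith
    exact (mul_eq_zero.1 h5).resolve_left hre
  have hI3 : I.imK = 0 := by
    have h5 : I.re * I.imK = 0 := by linarith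
    exact (mul_eq_zero.1 h5).resolve_left hre
  rw [hI1, hI2, hI3] at h
  nlinarith

lemma sq_neg_one_normSq (hI : I ^ 2 = -1) : Quaternion.normSq I = 1 := by
  have h := congrArg QuaternionAlgebra.re hI
  have hre := sq_neg_one_re hI
  simp [pow_two, Quaternion.re_mul, hre, Quaternion.re_one] at h
  rw [Quaternion.normSq_def', hre]
  nlinarith

lemma sq_neg_one_norm (hI : I ^ 2 = -1) : ‖I‖ = 1 := by
  have := sq_neg_one_normSq hI
  have h := Quaternion.normSq_eq_norm_mul_self (a := I)
  nlinarith [norm_nonneg I]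

end Aux

section Emb

/-- The real-linear embedding `ℂ → ℍ`, `z ↦ z.re + z.im • I`. -/
noncomputable def emb (I : ℍ) : ℂ →L[ℝ] ℍ :=
  (Complex.reCLM.smulRight (1 : ℍ)) + (Complex.imCLM.smulRight I)

variable {I : ℍ} {z w : ℂ}

lemma emb_apply (I : ℍ) (z : ℂ) : emb I z = (z.re : ℍ) + (z.im : ℍ) * I := by
  simp [emb, ContinuousLinearMap.smulRight_apply, Quaternion.coe_mul_eq_smul]
  rw [← Quaternion.coe_mul_eq_smul, mul_one]

lemma emb_one (I : ℍ) : emb I 1 = 1 := by simp [emb_apply]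

lemma emb_I (I : ℍ) : emb I Complex.I = I := by simp [emb_apply]

lemma emb_real (I : ℍ) (t : ℝ) : emb I (t : ℂ) = (t : ℍ) := by simp [emb_apply]

lemma emb_re (hI : I ^ 2 = -1) (z : ℂ) : (emb I z).re = z.re := by
  simp [emb_apply, Quaternion.re_mul, sq_neg_one_re hI]

lemma emb_mem_slicePlane (I : ℍ) (z : ℂ) : emb I z ∈ slicePlane I :=
  ⟨z.re, z.im, emb_apply I z⟩

lemma norm_emb (hI : I ^ 2 = -1) (z : ℂ) : ‖emb I z‖ = ‖z‖ := by
  have hre := sq_neg_one_re hI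
  have hns := sq_neg_one_normSq hI
  rw [Quaternion.normSq_def'] at hns
  rw [hre] at hns
  have hns' : I.imI ^ 2 + I.imJ ^ 2 + I.imK ^ 2 = 1 := by nlinarith [hns]
  have h1 : Quaternion.normSq (emb I z) = Complex.normSq z := by
    rw [Quaternion.normSq_def', Complex.normSq_apply]
    have he : emb I z = (z.re : ℍ) + z.im • I := by
      rw [emb_apply, Quaternion.coe_mul_eq_smul]
    simp only [he, Quaternion.re_add, Quaternion.imI_add, Quaternion.imJ_add,
      Quaternion.imK_add, Quaternion.re_coe, Quaternion.imI_coe, Quaternion.imJ_coe,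
      Quaternion.imK_coe, Quaternion.re_smul, Quaternion.imI_smul, Quaternion.imJ_smul,
      Quaternion.imK_smul, smul_eq_mul, hre, mul_zero, add_zero, zero_add]
    linear_combination (z.im ^ 2) * hns'
  have h2 := Quaternion.normSq_eq_norm_mul_self (a := emb I z)
  have h3 : Complex.normSq z = ‖z‖ * ‖z‖ := by
    rw [Complex.normSq_eq_norm_sq]; ring
  rw [h1, h3] at h2
  nlinarith [norm_nonneg z, norm_nonneg (emb I z)]

lemma emb_mul (hI : I ^ 2 = -1) (z w : ℂ) : emb I (z * w) = emb I z * emb I w := by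
  have h2 : I * I = -1 := by rw [← pow_two]; exact hI
  have h1 : ∀ r : ℝ, (r : ℍ) = r • (1 : ℍ) := fun r => by
    rw [← Quaternion.coe_mul_eq_smul, mul_one]
  simp only [emb_apply, Complex.mul_re, Complex.mul_im, h1, smul_mul_assoc, mul_smul_comm,
    one_mul, mul_one, h2, add_mul, mul_add]
  module

end Emb

section SM

variable (J : ℍ) (hJ : J ^ 2 = -1)

/-- `embRingHom J hJ : ℂ →+* ℍ` is the ring embedding onto the slice `ℂ_J`. -/
noncomputable def embRingHom : ℂ →+* ℍ where
  toFun := emb J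
  map_one' := emb_one J
  map_mul' := emb_mul hJ
  map_zero' := by simp
  map_add' := by simp

/-- `ℍ` viewed as a complex vector space via left multiplication by elements
of the slice `ℂ_J`. -/
def SM (J : ℍ) (hJ : J ^ 2 = -1) : Type := ℍ

noncomputable instance : NormedAddCommGroup (SM J hJ) := inferInstanceAs (NormedAddCommGroup ℍ)
instance : CompleteSpace (SM J hJ) := inferInstanceAs (CompleteSpace ℍ)
noncomputable instance : NormedSpace ℝ (SM J hJ) := inferInstanceAs (NormedSpace ℝ ℍ)

noncomputable instance : Module ℂ (SM J hJ) :=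
  Module.compHom ℍ (embRingHom J hJ)

/-- The identity map `ℍ → SM J hJ`. -/
def SM.mk : ℍ → SM J hJ := id

/-- The identity map `SM J hJ → ℍ`. -/
def SM.out : SM J hJ → ℍ := id

lemma sm_smul_def (z : ℂ) (q : SM J hJ) :
    z • q = SM.mk J hJ (emb J z * SM.out J hJ q) := rfl

lemma sm_norm_def (q : SM J hJ) : ‖q‖ = ‖SM.out J hJ q‖ := rfl

noncomputable instance : NormedSpace ℂ (SM J hJ) where
  norm_smul_le z q := by
    rw [sm_smul_def, sm_norm_def]
    show ‖emb J z * SM.out J hJ q‖ ≤ _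
    rw [norm_mul, norm_emb hJ]
    exact le_rfl

instance : IsScalarTower ℝ ℂ (SM J hJ) where
  smul_assoc r z q := by
    show SM.mk J hJ (emb J (r • z) * SM.out J hJ q)
        = r • SM.mk J hJ (emb J z * SM.out J hJ q)
    rw [map_smul, smul_mul_assoc]
    rfl

end SM

section Rep

/-- Two real-linear maps on `ℂ` agree if they agree on `1` and `Complex.I`. -/
lemma clm_ext_complex {E : Type*} [NormedAddCommGroup E] [NormedSpace ℝ E]
    {L M : ℂ →L[ℝ] E} (h1 : L 1 = M 1) (hi : L Complex.I = M Complex.I) : L = M := by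
  ext z
  have hz : z = z.re • (1 : ℂ) + z.im • Complex.I := by
    apply Complex.ext <;> simp
  rw [hz, map_add, map_add, map_smul, map_smul, map_smul, map_smul, h1, hi]

/-- The identity map `ℍ → SM J hJ` as a continuous real-linear map. -/
noncomputable def SM.mkL (J : ℍ) (hJ : J ^ 2 = -1) : ℍ →L[ℝ] SM J hJ where
  toFun := SM.mk J hJ
  map_add' _ _ := rfl
  map_smul' _ _ := rfl
  cont := continuous_id

set_option maxHeartbeats 2000000 in
lemma rep_formula (f : ℍ → ℍ) (hf : SliceHyperholomorphicOn f {p : ℍ | 0 < p.re})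
    (I J : ℍ) (hI : I ^ 2 = -1) (hJ : J ^ 2 = -1) {z : ℂ} (hz : 0 < z.re) :
    f (emb J z) = ((2:ℝ)⁻¹ • (1 - J * I)) * f (emb I z)
      + ((2:ℝ)⁻¹ • (1 + J * I)) * f (emb I (starRingEnd ℂ z)) := by
  classical
  set A : ℍ := (2:ℝ)⁻¹ • (1 - J * I) with hA
  set B : ℍ := (2:ℝ)⁻¹ • (1 + J * I) with hB
  set U : Set ℂ := {w : ℂ | 0 < w.re} with hU
  have hUo : IsOpen U := isOpen_lt continuous_const Complex.continuous_re
  have hUc : IsPreconnected U := (convex_halfSpace_re_gt (0:ℝ)).isPreconnected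
  have hΩo : IsOpen {p : ℍ | 0 < p.re} := isOpen_lt continuous_const Quaternion.continuous_re
  -- differentiability of f at slice points
  have hd : ∀ {K : ℍ}, K ^ 2 = -1 → ∀ {w : ℂ}, w ∈ U → DifferentiableAt ℝ f (emb K w) := by
    intro K hK w hw
    have hmem : emb K w ∈ {p : ℍ | 0 < p.re} := by
      simpa [emb_re hK, hU] using hw
    exact (hf.1 _ hmem).differentiableAt (hΩo.mem_nhds hmem)
  -- Cauchy-Riemann on slices
  have hcr : ∀ {K : ℍ}, K ^ 2 = -1 → ∀ {w : ℂ}, w ∈ U →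
      fderiv ℝ f (emb K w) 1 = -(K * fderiv ℝ f (emb K w) K) := by
    intro K hK w hw
    have hmem : emb K w ∈ {p : ℍ | 0 < p.re} := by simpa [emb_re hK, hU] using hw
    have := hf.2 K hK (emb K w) ⟨hmem, emb_mem_slicePlane K w⟩
    linear_combination (norm := module) this
  have hJJ : J * J = -1 := by rw [← sq]; exact hJ
  have hII : I * I = -1 := by rw [← sq]; exact hI
  -- algebraic identities
  have hJAI : J * A * I = -A := by
    rw [hA, mul_smul_comm, smul_mul_assoc, ← smul_neg]
    congr 1
    calc J * (1 - J * I) * I = J * I - J * J * (I * I) := by noncomm_ring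
    _ = -(1 - J * I) := by rw [hJJ, hII]; noncomm_ring
  have hJBI : J * B * I = B := by
    rw [hB, mul_smul_comm, smul_mul_assoc]
    congr 1
    calc J * (1 + J * I) * I = J * I + J * J * (I * I) := by noncomm_ring
    _ = 1 + J * I := by rw [hJJ, hII]; noncomm_ring
  have hAB : A + B = 1 := by
    rw [hA, hB, ← smul_add, sub_add_add_cancel]
    have h2 : (1 : ℍ) + 1 = (((2:ℝ)) : ℍ) := by norm_cast
    rw [h2, Quaternion.smul_coe]
    norm_num
  -- the two functions
  set G : ℂ → SM J hJ := fun w =>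
    SM.mk J hJ (A * f (emb I w) + B * f (emb I (starRingEnd ℂ w))) with hG
  set H : ℂ → SM J hJ := fun w => SM.mk J hJ (f (emb J w)) with hH
  -- conj as a CLM
  set conjL : ℂ →L[ℝ] ℂ := Complex.conjCLE.toContinuousLinearMap with hconjL
  have hconj_apply : ∀ w : ℂ, conjL w = starRingEnd ℂ w := fun w => rfl
  -- H is ℂ-differentiable on U
  have hHd : DifferentiableOn ℂ H U := by
    intro w hw
    have hw' : w ∈ U := hw
    set p : ℍ := emb J w with hp
    have h1 : HasFDerivAt H ((SM.mkL J hJ).comp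
        ((fderiv ℝ f p).comp (emb J))) w :=
      ((SM.mkL J hJ).hasFDerivAt.comp w
        (((hd hJ hw').hasFDerivAt).comp w (emb J).hasFDerivAt))
    set c : SM J hJ := SM.mk J hJ (fderiv ℝ f p 1) with hc
    have h2 : (((ContinuousLinearMap.id ℂ ℂ).smulRight c).restrictScalars ℝ)
        = (SM.mkL J hJ).comp ((fderiv ℝ f p).comp (emb J)) := by
      apply clm_ext_complex
      · show (1:ℂ) • c = SM.mk J hJ (fderiv ℝ f p (emb J 1))
        rw [one_smul, emb_one]
      · show (Complex.I : ℂ) • c = SM.mk J hJ (fderiv ℝ f p (emb J Complex.I))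
        rw [emb_I, sm_smul_def, emb_I]
        show SM.mk J hJ (J * fderiv ℝ f p 1) = SM.mk J hJ (fderiv ℝ f p J)
        rw [hcr hJ hw']
        congr 1
        rw [mul_neg, ← mul_assoc, hJJ, neg_mul, one_mul, neg_neg]
    exact (hasFDerivAt_of_restrictScalars ℝ h1 h2).differentiableAt.differentiableWithinAt
  -- G is ℂ-differentiable on U
  have hGd : DifferentiableOn ℂ G U := by
    intro w hw
    have hw' : w ∈ U := hw
    have hwc : (starRingEnd ℂ w) ∈ U := by
      simp only [hU, Set.mem_setOf_eq, Complex.conj_re] at hw' ⊢; exact hw'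
    set p : ℍ := emb I w with hp
    set q : ℍ := emb I (starRingEnd ℂ w) with hq
    have hu : HasFDerivAt (fun x : ℂ => f (emb I x)) ((fderiv ℝ f p).comp (emb I)) w :=
      ((hd hI hw').hasFDerivAt).comp w (emb I).hasFDerivAt
    have hv : HasFDerivAt (fun x : ℂ => f (emb I (starRingEnd ℂ x)))
        ((fderiv ℝ f q).comp ((emb I).comp conjL)) w := by
      have := ((hd hI hwc).hasFDerivAt).comp w ((emb I).comp conjL).hasFDerivAt
      exact this
    have h1 : HasFDerivAt G ((SM.mkL J hJ).comp
        (A • ((fderiv ℝ f p).comp (emb I)) + B • ((fderiv ℝ f q).comp ((emb I).comp conjL)))) w := by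
      refine (SM.mkL J hJ).hasFDerivAt.comp w ?_
      exact (hu.const_mul A).add (hv.const_mul B)
    set c : SM J hJ := SM.mk J hJ (A * fderiv ℝ f p 1 + B * fderiv ℝ f q 1) with hc
    have h2 : (((ContinuousLinearMap.id ℂ ℂ).smulRight c).restrictScalars ℝ)
        = (SM.mkL J hJ).comp
          (A • ((fderiv ℝ f p).comp (emb I)) + B • ((fderiv ℝ f q).comp ((emb I).comp conjL))) := by
      apply clm_ext_complex
      · show (1:ℂ) • c = SM.mk J hJ (A * fderiv ℝ f p (emb I 1) + B * fderiv ℝ f q (emb I (conjL 1)))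
        rw [one_smul]
        have : conjL 1 = 1 := by simp [hconj_apply]
        rw [this, emb_one]
      · show (Complex.I : ℂ) • c
            = SM.mk J hJ (A * fderiv ℝ f p (emb I Complex.I)
              + B * fderiv ℝ f q (emb I (conjL Complex.I)))
        have hci : conjL Complex.I = -Complex.I := by simp [hconj_apply]
        rw [hci, map_neg, emb_I, sm_smul_def, emb_I]
        show SM.mk J hJ (J * (A * fderiv ℝ f p 1 + B * fderiv ℝ f q 1))
            = SM.mk J hJ (A * fderiv ℝ f p I + B * fderiv ℝ f q (-I))
        congr 1
        rw [hcr hI hw', hcr hI hwc, map_neg]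
        have e1 : J * (A * -(I * fderiv ℝ f p I)) = A * fderiv ℝ f p I := by
          rw [mul_neg, mul_neg, ← mul_assoc, ← mul_assoc, hJAI, neg_mul, neg_neg]
        rw [mul_add, e1]
        congr 1
        rw [mul_neg, mul_neg, ← mul_assoc, ← mul_assoc, hJBI]
        rw [mul_neg]
    exact (hasFDerivAt_of_restrictScalars ℝ h1 h2).differentiableAt.differentiableWithinAt
  -- identity principle
  have hGa := hGd.analyticOnNhd hUo
  have hHa := hHd.analyticOnNhd hUo
  have hreal : ∀ t : ℝ, 0 < t → G (t : ℂ) = H (t : ℂ) := by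
    intro t ht
    simp only [hG, hH, Complex.conj_ofReal]
    congr 1
    rw [emb_real, emb_real, ← add_mul, hAB, one_mul]
  have h1U : (1:ℂ) ∈ U := by simp [hU]
  have hfreq : ∃ᶠ w in nhdsWithin (1:ℂ) {(1:ℂ)}ᶜ, G w = H w := by
    rw [Filter.frequently_iff]
    intro V hV
    rcases mem_nhdsWithin.1 hV with ⟨O, hOo, hO1, hOV⟩
    rcases Metric.isOpen_iff.1 hOo 1 hO1 with ⟨ε, hε, hball⟩
    set δ : ℝ := min ε 1 / 2 with hδ
    have hδ0 : 0 < δ := by positivity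
    have hδε : δ < ε := by
      have : min ε 1 ≤ ε := min_le_left _ _
      nlinarith [min_le_left ε 1]
    refine ⟨((1 + δ : ℝ) : ℂ), hOV ⟨hball ?_, ?_⟩, hreal (1 + δ) (by linarith)⟩
    · rw [Metric.mem_ball, Complex.dist_eq]
      have : ((1 + δ : ℝ) : ℂ) - 1 = ((δ : ℝ) : ℂ) := by push_cast; ring
      rw [this]
      show ‖((δ:ℝ):ℂ)‖ < ε
      rw [Complex.norm_real, Real.norm_eq_abs, abs_of_pos hδ0]
      exact hδε
    · simp only [Set.mem_compl_iff, Set.mem_singleton_iff]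
      intro hcon
      have : (1 + δ : ℝ) = 1 := by exact_mod_cast congrArg Complex.re hcon
      linarith
  have heq := hGa.eqOn_of_preconnected_of_frequently_eq hHa hUc h1U hfreq
  have := heq (show z ∈ U from hz)
  simp only [hG, hH] at this
  have := congrArg (SM.out J hJ) this
  exact this.symm

end Rep


section Main

open MeasureTheory
open scoped NNReal

/-- Comparison of the Hardy norms of a slice hyperholomorphic function on the half-space
`ℍ₊` along two slices: `N_J(f) ≤ 4 N_I(f)` for all `I, J ∈ 𝕊`. -/
theorem hardy_norm_slice_comparison (f : ℍ → ℍ)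
    (hf : SliceHyperholomorphicOn f {p : ℍ | 0 < p.re})
    (I J : ℍ) (hI : I ^ 2 = -1) (hJ : J ^ 2 = -1) :
    hardyN f J ≤ 4 * hardyN f I := by
  classical
  have hΩo : IsOpen {p : ℍ | 0 < p.re} := isOpen_lt continuous_const Quaternion.continuous_re
  have hcont : ContinuousOn f {p : ℍ | 0 < p.re} := hf.1.continuousOn
  -- norm bounds on the coefficients
  have hcoef : ∀ s : ℍ, ‖s‖ ≤ 2 → ‖(2:ℝ)⁻¹ • s‖₊ ≤ 1 := by
    intro s hs
    rw [← NNReal.coe_le_coe, coe_nnnorm, NNReal.coe_one, norm_smul]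
    rw [Real.norm_eq_abs]
    rw [abs_of_pos (by norm_num : (0:ℝ) < 2⁻¹)]
    linarith
  have hnJI : ‖J * I‖ = 1 := by
    rw [norm_mul, sq_neg_one_norm hJ, sq_neg_one_norm hI, one_mul]
  have hA1 : ‖(2:ℝ)⁻¹ • (1 - J * I)‖₊ ≤ 1 := by
    apply hcoef
    calc ‖(1:ℍ) - J * I‖ ≤ ‖(1:ℍ)‖ + ‖J * I‖ := norm_sub_le _ _
    _ = 2 := by rw [norm_one, hnJI]; norm_num
  have hB1 : ‖(2:ℝ)⁻¹ • (1 + J * I)‖₊ ≤ 1 := by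
    apply hcoef
    calc ‖(1:ℍ) + J * I‖ ≤ ‖(1:ℍ)‖ + ‖J * I‖ := norm_add_le _ _
    _ = 2 := by rw [norm_one, hnJI]; norm_num
  refine iSup₂_le fun x hx => ?_
  -- the slice-I integrand
  set a : ℝ → ℝ≥0∞ := fun y => (‖f ((x : ℍ) + (y : ℍ) * I)‖₊ : ℝ≥0∞) ^ 2 with ha
  have hIre := sq_neg_one_re hI
  -- measurability of a
  have hmg : Continuous fun y : ℝ => ((x : ℍ) + (y : ℍ) * I) :=
    continuous_const.add ((Quaternion.continuous_coe.comp continuous_id).mul continuous_const)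
  have hmaps : ∀ y : ℝ, ((x : ℍ) + (y : ℍ) * I) ∈ {p : ℍ | 0 < p.re} := by
    intro y
    simp only [Set.mem_setOf_eq, Quaternion.re_add, Quaternion.re_coe, Quaternion.re_mul,
      Quaternion.imI_coe, Quaternion.imJ_coe, Quaternion.imK_coe, hIre]
    simpa using hx
  have hfc : Continuous fun y : ℝ => f ((x : ℍ) + (y : ℍ) * I) :=
    continuousOn_univ.mp
      ((hcont.comp hmg.continuousOn) (fun y _ => hmaps y))
  have haC : Continuous a := (ENNReal.continuous_pow 2).comp (ENNReal.continuous_coe.comp hfc.nnnorm)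
  have hameas : Measurable a := haC.measurable
  -- pointwise estimate via the representation formula
  have hpt : ∀ y : ℝ, (‖f ((x : ℍ) + (y : ℍ) * J)‖₊ : ℝ≥0∞) ^ 2 ≤ 2 * a y + 2 * a (-y) := by
    intro y
    set z : ℂ := (x : ℂ) + (y : ℂ) * Complex.I with hz
    have hzre : z.re = x := by simp [hz]
    have hzim : z.im = y := by simp [hz]
    have hrep := rep_formula f hf I J hI hJ (z := z) (by rw [hzre]; exact hx)
    have hembJ : emb J z = (x : ℍ) + (y : ℍ) * J := by rw [emb_apply, hzre, hzim]
    have hembI : emb I z = (x : ℍ) + (y : ℍ) * I := by rw [emb_apply, hzre, hzim]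
    have hembI' : emb I (starRingEnd ℂ z) = (x : ℍ) + ((-y : ℝ) : ℍ) * I := by
      rw [emb_apply]
      simp [hzre, hzim]
    rw [hembJ, hembI, hembI'] at hrep
    set u := f ((x : ℍ) + (y : ℍ) * I) with hu
    set v := f ((x : ℍ) + ((-y : ℝ) : ℍ) * I) with hv
    have hnorm : ‖f ((x : ℍ) + (y : ℍ) * J)‖₊ ≤ ‖u‖₊ + ‖v‖₊ := by
      rw [hrep]
      calc ‖(2:ℝ)⁻¹ • (1 - J * I) * u + (2:ℝ)⁻¹ • (1 + J * I) * v‖₊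
          ≤ ‖(2:ℝ)⁻¹ • (1 - J * I) * u‖₊ + ‖(2:ℝ)⁻¹ • (1 + J * I) * v‖₊ := nnnorm_add_le _ _
      _ = ‖(2:ℝ)⁻¹ • (1 - J * I)‖₊ * ‖u‖₊ + ‖(2:ℝ)⁻¹ • (1 + J * I)‖₊ * ‖v‖₊ := by
          rw [nnnorm_mul, nnnorm_mul]
      _ ≤ 1 * ‖u‖₊ + 1 * ‖v‖₊ := add_le_add (mul_le_mul_left hA1 _) (mul_le_mul_left hB1 _)
      _ = ‖u‖₊ + ‖v‖₊ := by rw [one_mul, one_mul]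
    have hsq : ∀ s t : ℝ≥0, ((s + t : ℝ≥0) : ℝ≥0∞) ^ 2
        ≤ 2 * (s : ℝ≥0∞) ^ 2 + 2 * (t : ℝ≥0∞) ^ 2 := by
      intro s t
      have h : (s + t) ^ 2 ≤ 2 * s ^ 2 + 2 * t ^ 2 := by
        rw [← NNReal.coe_le_coe]
        push_cast
        nlinarith [sq_nonneg ((s:ℝ) - t), NNReal.coe_nonneg s, NNReal.coe_nonneg t]
      calc ((s + t : ℝ≥0) : ℝ≥0∞) ^ 2 = (((s + t) ^ 2 : ℝ≥0) : ℝ≥0∞) := by push_cast; ring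
      _ ≤ ((2 * s ^ 2 + 2 * t ^ 2 : ℝ≥0) : ℝ≥0∞) := ENNReal.coe_le_coe.2 h
      _ = 2 * (s : ℝ≥0∞) ^ 2 + 2 * (t : ℝ≥0∞) ^ 2 := by push_cast; ring
    calc (‖f ((x : ℍ) + (y : ℍ) * J)‖₊ : ℝ≥0∞) ^ 2
        ≤ ((‖u‖₊ + ‖v‖₊ : ℝ≥0) : ℝ≥0∞) ^ 2 := by
          have hle' : (‖f ((x : ℍ) + (y : ℍ) * J)‖₊ : ℝ≥0∞)
              ≤ ((‖u‖₊ + ‖v‖₊ : ℝ≥0) : ℝ≥0∞) := by exact_mod_cast hnorm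
          exact pow_le_pow_left₀ zero_le hle' 2
    _ ≤ 2 * (‖u‖₊ : ℝ≥0∞) ^ 2 + 2 * (‖v‖₊ : ℝ≥0∞) ^ 2 := hsq _ _
    _ = 2 * a y + 2 * a (-y) := by rw [ha]
  -- integrate
  have hneg : ∫⁻ y : ℝ, a (-y) = ∫⁻ y : ℝ, a y := by
    exact (Measure.measurePreserving_neg (volume : Measure ℝ)).lintegral_comp_emb
      (MeasurableEquiv.neg ℝ).measurableEmbedding a
  have hbound : ∫⁻ y : ℝ, (‖f ((x : ℍ) + (y : ℍ) * J)‖₊ : ℝ≥0∞) ^ 2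
      ≤ 4 * ∫⁻ y : ℝ, a y := by
    calc ∫⁻ y : ℝ, (‖f ((x : ℍ) + (y : ℍ) * J)‖₊ : ℝ≥0∞) ^ 2
        ≤ ∫⁻ y : ℝ, (2 * a y + 2 * a (-y)) := lintegral_mono hpt
    _ = (∫⁻ y : ℝ, 2 * a y) + ∫⁻ y : ℝ, 2 * a (-y) := by
        apply lintegral_add_left
        exact hameas.const_mul 2
    _ = 2 * (∫⁻ y : ℝ, a y) + 2 * ∫⁻ y : ℝ, a (-y) := by
        have hm : Measurable fun y : ℝ => a (-y) := by exact hameas.comp measurable_neg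
        rw [lintegral_const_mul 2 hameas, lintegral_const_mul 2 hm]
    _ = 4 * ∫⁻ y : ℝ, a y := by rw [hneg]; ring
  have hle : (∫⁻ y : ℝ, a y) ≤ hardyN f I := by
    unfold hardyN
    exact le_iSup₂ (f := fun (x' : ℝ) (_ : 0 < x') =>
      ∫⁻ y : ℝ, (‖f ((x' : ℍ) + (y : ℍ) * I)‖₊ : ℝ≥0∞) ^ 2) x hx
  exact hbound.trans (mul_le_mul_right hle 4)

end Main
end

section
/- Let f : ℍ₊ → ℍ be slice hyperholomorphic on ℍ₊ = {p ∈ ℍ : Re p > 0}, and for I ∈ 𝕊 put N_I(f) = sup_{x>0} ∫_ℝ |f(x + Iy)|² dy ∈ [0, ∞]. If N_I(f) < ∞ for some I ∈ 𝕊, then N_J(f) < ∞ for every J ∈ 𝕊; that is, f belongs to the Hardy space H₂(Π₊,I) of one slice if and only if it belongs to the Hardy space of every slice. -/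
local notation "ℍ" => Quaternion ℝ

open scoped ENNReal
open Complex MeasureTheory

namespace HardyAux

lemma mul_self_of_sq {J : ℍ} (hJ : J ^ 2 = -1) : J * J = -1 := by rw [← sq]; exact hJ

lemma norm_of_sq {J : ℍ} (hJ : J ^ 2 = -1) : ‖J‖ = 1 := by
  have h : ‖J‖ * ‖J‖ = 1 := by
    rw [← norm_mul, mul_self_of_sq hJ, norm_neg, norm_one]
  nlinarith [norm_nonneg J]

lemma re_of_sq {J : ℍ} (hJ : J ^ 2 = -1) : J.re = 0 := by
  have h1 : Quaternion.normSq J = 1 := by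
    rw [Quaternion.normSq_eq_norm_mul_self, norm_of_sq hJ]; norm_num
  have h2 : (J * J).re = (-1 : ℍ).re := by rw [mul_self_of_sq hJ]
  rw [Quaternion.re_mul] at h2
  rw [Quaternion.normSq_def'] at h1
  simp only [Quaternion.re_neg, Quaternion.re_one] at h2
  nlinarith [h1, h2]

/-- The real-linear embedding `z ↦ z.re + z.im • K` of `ℂ` into `ℍ`. -/
noncomputable def lmap (K : ℍ) : ℂ →L[ℝ] ℍ :=
  LinearMap.toContinuousLinearMap
    { toFun := fun z => ((z.re : ℝ) : ℍ) + z.im • K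
      map_add' := fun z w => by
        simp only [Complex.add_re, Complex.add_im, Quaternion.coe_add, add_smul]; abel
      map_smul' := fun r z => by
        simp only [Complex.real_smul, Complex.mul_re, Complex.mul_im, RingHom.id_apply,
          Complex.ofReal_re, Complex.ofReal_im, smul_add, smul_smul]
        push_cast
        ring_nf
        simp [Quaternion.coe_mul]
        rw [Quaternion.coe_mul_eq_smul] }

@[simp] lemma lmap_apply (K : ℍ) (z : ℂ) : lmap K z = ((z.re : ℝ) : ℍ) + z.im • K := rfl

lemma lmap_re {K : ℍ} (hK : K.re = 0) (z : ℂ) : (lmap K z).re = z.re := by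
  simp [lmap_apply, Quaternion.re_coe, hK]

lemma lmap_mem_slice (K : ℍ) (z : ℂ) : lmap K z ∈ slicePlane K :=
  ⟨z.re, z.im, by rw [Quaternion.coe_mul_eq_smul]; rfl⟩

lemma normSq_lmap {K : ℍ} (hre : K.re = 0) (hn : ‖K‖ = 1) (z : ℂ) :
    Quaternion.normSq (lmap K z) = z.re ^ 2 + z.im ^ 2 := by
  have h1 : Quaternion.normSq K = 1 := by
    rw [Quaternion.normSq_eq_norm_mul_self, hn]; norm_num
  rw [Quaternion.normSq_def'] at h1 ⊢
  simp only [lmap_apply, Quaternion.re_add, Quaternion.imI_add, Quaternion.imJ_add,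
    Quaternion.imK_add, Quaternion.re_coe, Quaternion.imI_coe, Quaternion.imJ_coe,
    Quaternion.imK_coe, Quaternion.re_smul, Quaternion.imI_smul, Quaternion.imJ_smul,
    Quaternion.imK_smul, smul_eq_mul, hre]
  rw [hre] at h1
  ring_nf
  nlinarith [h1, sq_nonneg z.im]

lemma norm_lmap {K : ℍ} (hre : K.re = 0) (hn : ‖K‖ = 1) (z : ℂ) : ‖lmap K z‖ = ‖z‖ := by
  have h1 : ‖lmap K z‖ * ‖lmap K z‖ = ‖z‖ * ‖z‖ := by
    rw [← Quaternion.normSq_eq_norm_mul_self, normSq_lmap hre hn]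
    rw [show ‖z‖ * ‖z‖ = ‖z‖ ^ 2 by ring,
      Complex.sq_norm, Complex.normSq_apply]
    ring
  nlinarith [norm_nonneg (lmap K z), norm_nonneg z, h1]


lemma coe_two : (((2:ℝ)) : ℍ) = 2 := by
  rw [show (2:ℝ) = 1 + 1 by norm_num, Quaternion.coe_add, Quaternion.coe_one]
  norm_num

lemma half_eq (x : ℍ) : x / 2 = (2⁻¹ : ℝ) • x := by
  have h2 : ((2 : ℍ))⁻¹ = ((((2 : ℝ))⁻¹ : ℝ) : ℍ) := by
    rw [Quaternion.coe_inv, coe_two]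
  rw [div_eq_mul_inv, h2, Quaternion.mul_coe_eq_smul]

lemma aI_eq {I J : ℍ} (hII : I * I = -1) (hJJ : J * J = -1) :
    (1 - J * I) / 2 * I = J * ((1 - J * I) / 2) := by
  rw [half_eq, smul_mul_assoc, mul_smul_comm]
  congr 1
  rw [sub_mul, one_mul, mul_assoc, hII, mul_sub, mul_one, ← mul_assoc, hJJ]
  noncomm_ring

lemma bI_eq {I J : ℍ} (hII : I * I = -1) (hJJ : J * J = -1) :
    (1 + J * I) / 2 * I = -(J * ((1 + J * I) / 2)) := by
  rw [half_eq, smul_mul_assoc, mul_smul_comm, ← smul_neg]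
  congr 1
  rw [add_mul, one_mul, mul_assoc, hII, mul_add, mul_one, ← mul_assoc, hJJ]
  noncomm_ring

lemma ab_sum {I J : ℍ} : (1 - J * I) / 2 + (1 + J * I) / 2 = 1 := by
  rw [half_eq, half_eq, ← smul_add]
  rw [show (1 : ℍ) - J * I + (1 + J * I) = 2 by noncomm_ring; rw [two_smul]; norm_num]
  have h21 : ((2:ℝ)) • (1:ℍ) = 2 := by
    rw [← Quaternion.coe_mul_eq_smul, mul_one, coe_two]
  rw [← h21, smul_smul]
  norm_num

set_option maxHeartbeats 1000000 in
/-- The representation formula. -/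
lemma repr_formula (f : ℍ → ℍ) (hf : SliceHyperholomorphicOn f {p : ℍ | 0 < p.re})
    {I J : ℍ} (hI : I ^ 2 = -1) (hJ : J ^ 2 = -1) {z : ℂ} (hz : 0 < z.re) :
    f (lmap J z) = (1 - J * I) / 2 * f (lmap I z) + (1 + J * I) / 2 * f (lmap (-I) z) := by
  have hII : I * I = -1 := mul_self_of_sq hI
  have hJJ : J * J = -1 := mul_self_of_sq hJ
  have hIre : I.re = 0 := re_of_sq hI
  have hJre : J.re = 0 := re_of_sq hJ
  have hJn : ‖J‖ = 1 := norm_of_sq hJ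
  have hnIre : (-I).re = 0 := by simp [hIre]
  set Ω : Set ℍ := {p : ℍ | 0 < p.re} with hΩdef
  have hΩ : IsOpen Ω := isOpen_lt continuous_const Quaternion.continuous_re
  -- the complex module structure on ℍ via J
  letI : Module ℂ ℍ := Module.compHom ℍ (Complex.liftAux J hJJ).toRingHom
  have hsmul : ∀ (w : ℂ) (q : ℍ), w • q = ((w.re : ℝ) + w.im • J : ℍ) * q := by
    intro w q
    show Complex.liftAux J hJJ w * q = _
    rw [Complex.liftAux_apply]
    rfl
  letI : IsScalarTower ℝ ℂ ℍ :=
    ⟨fun r w q => by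
      rw [hsmul, hsmul, ← smul_mul_assoc]
      congr 1
      simp only [Complex.real_smul, Complex.mul_re, Complex.mul_im, Complex.ofReal_re,
        Complex.ofReal_im, smul_add, smul_smul]
      push_cast
      ring_nf
      rw [Quaternion.coe_mul_eq_smul]
      simp⟩
  letI : NormedSpace ℂ ℍ :=
    ⟨fun w q => by
      rw [hsmul, norm_mul]
      have : ((w.re : ℝ) + w.im • J : ℍ) = lmap J w := rfl
      rw [this, norm_lmap hJre hJn]⟩
  -- the half-plane
  set U : Set ℂ := {w : ℂ | 0 < w.re} with hUdef
  have hUo : IsOpen U := isOpen_lt continuous_const Complex.continuous_re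
  have hUc : IsPreconnected U := (convex_halfSpace_re_gt 0).isPreconnected
  have hmem : ∀ (K : ℍ), K.re = 0 → ∀ w ∈ U, lmap K w ∈ Ω := by
    intro K hK w hw
    show 0 < (lmap K w).re
    rw [lmap_re hK]; exact hw
  have hfd : ∀ p ∈ Ω, HasFDerivAt f (fderiv ℝ f p) p := fun p hp =>
    (hf.1.differentiableAt (hΩ.mem_nhds hp)).hasFDerivAt
  -- Cauchy-Riemann rearranged
  have hCR : ∀ K : ℍ, K ^ 2 = -1 → ∀ p ∈ Ω ∩ slicePlane K,
      fderiv ℝ f p K = K * fderiv ℝ f p 1 := by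
    intro K hK p hp
    have h0 := hf.2 K hK p hp
    have h1 : K * (fderiv ℝ f p 1 + K * fderiv ℝ f p K) = 0 := by rw [h0, mul_zero]
    rw [mul_add, ← mul_assoc, mul_self_of_sq hK, neg_one_mul, add_neg_eq_zero] at h1
    exact h1.symm
  -- the two functions
  set a : ℍ := (1 - J * I) / 2 with ha
  set b : ℍ := (1 + J * I) / 2 with hb
  set g : ℂ → ℍ := fun w => f (lmap J w) with hg
  set ψ : ℂ → ℍ := fun w => a * f (lmap I w) + b * f (lmap (-I) w) with hψ
  -- holomorphy criterion
  have key : ∀ (F : ℂ → ℍ) (w : ℂ) (D : ℂ →L[ℝ] ℍ), HasFDerivAt F D w →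
      D Complex.I = J * D 1 → DifferentiableAt ℂ F w := by
    intro F w D hD hDcr
    set L : ℂ →L[ℂ] ℍ := LinearMap.toContinuousLinearMap
      { toFun := fun u => u • (D 1)
        map_add' := fun u v => add_smul u v _
        map_smul' := fun u v => by
          simp only [RingHom.id_apply, smul_eq_mul]
          exact mul_smul u v (D 1) } with hL
    have hLD : ∀ u : ℂ, L u = D u := by
      intro u
      have h1 : L u = u • (D 1) := rfl
      rw [h1, hsmul, add_mul, Quaternion.coe_mul_eq_smul, smul_mul_assoc, hDcr.symm]
      have h2 : u = (u.re : ℂ) + u.im • Complex.I := by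
        rw [Complex.real_smul, Complex.re_add_im]
      conv_rhs => rw [h2]
      rw [D.map_add, D.map_smul]
      congr 1
      have h3 : ((u.re : ℂ)) = u.re • (1 : ℂ) := by
        rw [Complex.real_smul, mul_one]
      rw [h3, D.map_smul]
    have hres : L.restrictScalars ℝ = D := ContinuousLinearMap.ext fun u => hLD u
    exact (hasFDerivAt_of_restrictScalars ℝ hD hres).differentiableAt
  -- g is holomorphic
  have hg_diff : DifferentiableOn ℂ g U := by
    intro w hw
    have hpmem : lmap J w ∈ Ω := hmem J hJre w hw
    set D := fderiv ℝ f (lmap J w) with hD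
    have h1 : HasFDerivAt g (D.comp (lmap J)) w :=
      (hfd _ hpmem).comp w (lmap J).hasFDerivAt
    refine (key g w _ h1 ?_).differentiableWithinAt
    have e1 : lmap J Complex.I = J := by simp
    have e2 : lmap J (1 : ℂ) = 1 := by simp
    show D (lmap J Complex.I) = J * D (lmap J 1)
    rw [e1, e2]
    exact hCR J hJ _ ⟨hpmem, lmap_mem_slice J w⟩
  -- ψ is holomorphic
  have hψ_diff : DifferentiableOn ℂ ψ U := by
    intro w hw
    have hpmem : lmap I w ∈ Ω := hmem I hIre w hw
    have hqmem : lmap (-I) w ∈ Ω := hmem (-I) hnIre w hw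
    set Dp := fderiv ℝ f (lmap I w) with hDp
    set Dq := fderiv ℝ f (lmap (-I) w) with hDq
    set E := ((ContinuousLinearMap.mul ℝ ℍ a).comp (Dp.comp (lmap I))) +
      ((ContinuousLinearMap.mul ℝ ℍ b).comp (Dq.comp (lmap (-I)))) with hE
    have h1 : HasFDerivAt ψ E w := by
      exact (((ContinuousLinearMap.mul ℝ ℍ a).hasFDerivAt).comp w
        ((hfd _ hpmem).comp w (lmap I).hasFDerivAt)).add
        (((ContinuousLinearMap.mul ℝ ℍ b).hasFDerivAt).comp w
        ((hfd _ hqmem).comp w (lmap (-I)).hasFDerivAt))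
    refine (key ψ w E h1 ?_).differentiableWithinAt
    have e1 : lmap I Complex.I = I := by simp
    have e2 : lmap I (1 : ℂ) = 1 := by simp
    have e3 : lmap (-I) Complex.I = -I := by simp
    have e4 : lmap (-I) (1 : ℂ) = 1 := by simp
    have hq_sliceI : lmap (-I) w ∈ slicePlane I := by
      refine ⟨w.re, -w.im, ?_⟩
      rw [Quaternion.coe_mul_eq_smul]
      simp [neg_smul, smul_neg]
    have hcrp : Dp I = I * Dp 1 := hCR I hI _ ⟨hpmem, lmap_mem_slice I w⟩
    have hcrq : Dq I = I * Dq 1 := hCR I hI _ ⟨hqmem, hq_sliceI⟩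
    show E Complex.I = J * E 1
    have hEI : E Complex.I = a * (Dp I) + b * (Dq (-I)) := by
      simp only [hE, ContinuousLinearMap.add_apply, ContinuousLinearMap.comp_apply,
        ContinuousLinearMap.mul_apply', e1, e3]
    have hE1 : E 1 = a * (Dp 1) + b * (Dq 1) := by
      simp only [hE, ContinuousLinearMap.add_apply, ContinuousLinearMap.comp_apply,
        ContinuousLinearMap.mul_apply', e2, e4]
    rw [hEI, hE1, map_neg, hcrp, hcrq]
    have haI : a * I = J * a := aI_eq hII hJJ
    have hbI : b * I = -(J * b) := bI_eq hII hJJ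
    calc a * (I * Dp 1) + b * (-(I * Dq 1))
        = (a * I) * Dp 1 - (b * I) * Dq 1 := by
          rw [mul_neg, ← mul_assoc, ← mul_assoc, ← sub_eq_add_neg]
      _ = (J * a) * Dp 1 + (J * b) * Dq 1 := by
          rw [haI, hbI, neg_mul, sub_neg_eq_add]
      _ = J * (a * Dp 1 + b * Dq 1) := by
          rw [mul_add, ← mul_assoc, ← mul_assoc]
  -- analyticity and the identity theorem
  have hg_an : AnalyticOnNhd ℂ g U := hg_diff.analyticOnNhd hUo
  have hψ_an : AnalyticOnNhd ℂ ψ U := hψ_diff.analyticOnNhd hUo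
  have hreal : ∀ t : ℝ, 0 < t → g (t : ℂ) = ψ (t : ℂ) := by
    intro t ht
    have hl : ∀ K : ℍ, lmap K (t : ℂ) = (t : ℍ) := by
      intro K; simp
    rw [hg, hψ]
    simp only [hl]
    rw [← add_mul, ha, hb, ab_sum, one_mul]
  have hfreq : ∃ᶠ w in nhdsWithin (1 : ℂ) {(1 : ℂ)}ᶜ, g w = ψ w := by
    rw [Filter.frequently_iff]
    intro s hs
    rcases Metric.mem_nhdsWithin_iff.1 hs with ⟨ε, hε, hsub⟩
    refine ⟨((1 + ε / 2 : ℝ) : ℂ), hsub ⟨?_, ?_⟩, hreal _ (by linarith)⟩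
    · rw [Metric.mem_ball, Complex.dist_eq]
      have : ((1 + ε / 2 : ℝ) : ℂ) - 1 = ((ε / 2 : ℝ) : ℂ) := by push_cast; ring
      rw [this, Complex.norm_real, Real.norm_eq_abs, abs_of_pos (by linarith)]
      linarith
    · simp only [Set.mem_compl_iff, Set.mem_singleton_iff]
      intro hcon
      have : (1 + ε / 2 : ℝ) = 1 := by exact_mod_cast hcon
      linarith
  have h1U : (1 : ℂ) ∈ U := by show (0:ℝ) < (1:ℂ).re; simp
  have heq : Set.EqOn g ψ U :=
    hg_an.eqOn_of_preconnected_of_frequently_eq hψ_an hUc h1U hfreq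
  exact heq hz



lemma sq_add_le_three (s t : ℝ≥0∞) : (s + t) ^ 2 ≤ 3 * s ^ 2 + 3 * t ^ 2 := by
  have hst : s * t ≤ s ^ 2 + t ^ 2 := by
    rcases le_total s t with h | h
    · calc s * t ≤ t * t := mul_le_mul_left h t
        _ = t ^ 2 := (sq t).symm
        _ ≤ s ^ 2 + t ^ 2 := le_add_self
    · calc s * t ≤ s * s := mul_le_mul_right h s
        _ = s ^ 2 := (sq s).symm
        _ ≤ s ^ 2 + t ^ 2 := le_self_add
  calc (s + t) ^ 2 = s ^ 2 + 2 * (s * t) + t ^ 2 := by ring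
    _ ≤ s ^ 2 + 2 * (s ^ 2 + t ^ 2) + t ^ 2 := by gcongr
    _ = 3 * s ^ 2 + 3 * t ^ 2 := by ring

lemma norm_two : ‖(2 : ℍ)‖ = 2 := by
  rw [← coe_two, Quaternion.norm_coe]
  norm_num

lemma nnnorm_a_le {I J : ℍ} (hI : I ^ 2 = -1) (hJ : J ^ 2 = -1) :
    ‖(1 - J * I) / 2‖₊ ≤ 1 := by
  rw [← NNReal.coe_le_coe, coe_nnnorm, NNReal.coe_one, norm_div, norm_two]
  have h1 : ‖(1 : ℍ) - J * I‖ ≤ 2 := by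
    calc ‖(1 : ℍ) - J * I‖ ≤ ‖(1 : ℍ)‖ + ‖J * I‖ := norm_sub_le _ _
      _ = 2 := by rw [norm_one, norm_mul, norm_of_sq hI, norm_of_sq hJ]; norm_num
  linarith

lemma nnnorm_b_le {I J : ℍ} (hI : I ^ 2 = -1) (hJ : J ^ 2 = -1) :
    ‖(1 + J * I) / 2‖₊ ≤ 1 := by
  rw [← NNReal.coe_le_coe, coe_nnnorm, NNReal.coe_one, norm_div, norm_two]
  have h1 : ‖(1 : ℍ) + J * I‖ ≤ 2 := by
    calc ‖(1 : ℍ) + J * I‖ ≤ ‖(1 : ℍ)‖ + ‖J * I‖ := norm_add_le _ _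
      _ = 2 := by rw [norm_one, norm_mul, norm_of_sq hI, norm_of_sq hJ]; norm_num
  linarith

end HardyAux

/-- A slice hyperholomorphic function on the half-space `ℍ₊` belongs to the Hardy space
of one slice if and only if it belongs to the Hardy space of every slice. -/
theorem hardy_space_slice_independent (f : ℍ → ℍ)
    (hf : SliceHyperholomorphicOn f {p : ℍ | 0 < p.re})
    (I : ℍ) (hI : I ^ 2 = -1) (hfin : hardyN f I < ⊤) :
    ∀ J : ℍ, J ^ 2 = -1 → hardyN f J < ⊤ := by
  intro J hJ
  open HardyAux in
  have key : hardyN f J ≤ 6 * hardyN f I := by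
    refine iSup₂_le fun x hx => ?_
    set a : ℍ := (1 - J * I) / 2 with ha
    set b : ℍ := (1 + J * I) / 2 with hb
    have hIre : I.re = 0 := HardyAux.re_of_sq hI
    have hJre : J.re = 0 := HardyAux.re_of_sq hJ
    -- the representation formula at (x, y)
    have hrep : ∀ y : ℝ, f ((x : ℍ) + (y : ℍ) * J) =
        a * f ((x : ℍ) + (y : ℍ) * I) + b * f ((x : ℍ) + ((-y : ℝ) : ℍ) * I) := by
      intro y
      set z : ℂ := ⟨x, y⟩ with hz
      have hzre : 0 < z.re := hx
      have h1 : HardyAux.lmap J z = (x : ℍ) + (y : ℍ) * J := by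
        rw [HardyAux.lmap_apply, Quaternion.coe_mul_eq_smul]
      have h2 : HardyAux.lmap I z = (x : ℍ) + (y : ℍ) * I := by
        rw [HardyAux.lmap_apply, Quaternion.coe_mul_eq_smul]
      have h3 : HardyAux.lmap (-I) z = (x : ℍ) + ((-y : ℝ) : ℍ) * I := by
        rw [HardyAux.lmap_apply, Quaternion.coe_mul_eq_smul, neg_smul, smul_neg]
      have := HardyAux.repr_formula f hf hI hJ hzre
      rw [h1, h2, h3] at this
      exact this
    -- measurability
    have hcoe : Continuous (fun y : ℝ => ((y : ℝ) : ℍ)) := Quaternion.continuous_coe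
    have hcont : Continuous fun y : ℝ => f ((x : ℍ) + (y : ℍ) * I) := by
      have hmap : Continuous fun y : ℝ => (x : ℍ) + (y : ℍ) * I :=
        continuous_const.add (hcoe.mul continuous_const)
      refine ContinuousOn.comp_continuous hf.1.continuousOn hmap fun y => ?_
      show 0 < ((x : ℍ) + (y : ℍ) * I).re
      rw [Quaternion.re_add, Quaternion.coe_mul_eq_smul, Quaternion.re_smul,
        Quaternion.re_coe, hIre]
      simpa using hx
    set u : ℝ → ℝ≥0∞ := fun y => (‖f ((x : ℍ) + (y : ℍ) * I)‖₊ : ℝ≥0∞) ^ 2 with hu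
    have hmu : Measurable u := by
      exact ((hcont.nnnorm.measurable).coe_nnreal_ennreal).pow_const 2
    -- pointwise bound
    have hpt : ∀ y : ℝ, (‖f ((x : ℍ) + (y : ℍ) * J)‖₊ : ℝ≥0∞) ^ 2 ≤
        3 * u y + 3 * u (-y) := by
      intro y
      have h0 : ‖f ((x : ℍ) + (y : ℍ) * J)‖₊ ≤
          ‖f ((x : ℍ) + (y : ℍ) * I)‖₊ + ‖f ((x : ℍ) + ((-y : ℝ) : ℍ) * I)‖₊ := by
        rw [hrep y]
        refine le_trans (nnnorm_add_le _ _) ?_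
        have e1 : ‖a * f ((x : ℍ) + (y : ℍ) * I)‖₊ ≤ ‖f ((x : ℍ) + (y : ℍ) * I)‖₊ := by
          rw [nnnorm_mul]
          calc ‖a‖₊ * ‖f ((x : ℍ) + (y : ℍ) * I)‖₊ ≤ 1 * ‖f ((x : ℍ) + (y : ℍ) * I)‖₊ :=
            mul_le_mul' (HardyAux.nnnorm_a_le hI hJ) le_rfl
            _ = _ := one_mul _
        have e2 : ‖b * f ((x : ℍ) + ((-y : ℝ) : ℍ) * I)‖₊ ≤
            ‖f ((x : ℍ) + ((-y : ℝ) : ℍ) * I)‖₊ := by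
          rw [nnnorm_mul]
          calc ‖b‖₊ * ‖f ((x : ℍ) + ((-y : ℝ) : ℍ) * I)‖₊ ≤
              1 * ‖f ((x : ℍ) + ((-y : ℝ) : ℍ) * I)‖₊ :=
            mul_le_mul' (HardyAux.nnnorm_b_le hI hJ) le_rfl
            _ = _ := one_mul _
        exact add_le_add e1 e2
      calc (‖f ((x : ℍ) + (y : ℍ) * J)‖₊ : ℝ≥0∞) ^ 2
          ≤ ((‖f ((x : ℍ) + (y : ℍ) * I)‖₊ : ℝ≥0∞) +
            (‖f ((x : ℍ) + ((-y : ℝ) : ℍ) * I)‖₊ : ℝ≥0∞)) ^ 2 := by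
            gcongr
            exact_mod_cast h0
        _ ≤ 3 * u y + 3 * u (-y) := by
            exact HardyAux.sq_add_le_three _ _
    -- integrate
    have hint : (∫⁻ y : ℝ, (‖f ((x : ℍ) + (y : ℍ) * J)‖₊ : ℝ≥0∞) ^ 2) ≤
        6 * hardyN f I := by
      have hneg : (∫⁻ y : ℝ, u (-y)) = ∫⁻ y : ℝ, u y :=
        (Measure.measurePreserving_neg volume).lintegral_comp_emb
          (MeasurableEquiv.neg ℝ).measurableEmbedding u
      have hle : (∫⁻ y : ℝ, u y) ≤ hardyN f I := by
        refine le_trans ?_ (le_iSup₂ (f := fun (x : ℝ) (_ : 0 < x) =>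
          ∫⁻ y : ℝ, (‖f ((x : ℍ) + (y : ℍ) * I)‖₊ : ℝ≥0∞) ^ 2) x hx)
        exact le_rfl
      calc (∫⁻ y : ℝ, (‖f ((x : ℍ) + (y : ℍ) * J)‖₊ : ℝ≥0∞) ^ 2)
          ≤ ∫⁻ y : ℝ, (3 * u y + 3 * u (-y)) := lintegral_mono fun y => hpt y
        _ = (∫⁻ y : ℝ, 3 * u y) + ∫⁻ y : ℝ, 3 * u (-y) := by
            refine lintegral_add_left (hmu.const_mul 3) _
        _ = 3 * (∫⁻ y : ℝ, u y) + 3 * ∫⁻ y : ℝ, u (-y) := by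
            rw [lintegral_const_mul' 3 _ (by norm_num), lintegral_const_mul' 3 _ (by norm_num)]
        _ = 6 * ∫⁻ y : ℝ, u y := by rw [hneg]; ring
        _ ≤ 6 * hardyN f I := by gcongr
    exact hint
  calc hardyN f J ≤ 6 * hardyN f I := key
    _ < ⊤ := ENNReal.mul_lt_top (by norm_num) hfin
end
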